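/- Let F = g₀·∂/∂x + g₁·∂/∂y₁ + g₂·∂/∂y₂ be a singular formal vector field on ℂ³ with F(𝔪) ⊆ 𝔪². Then the following are equivalent: (1) the formal diffeomorphism exp(F) is transversally symplectic; (2) g₀ = 0 and F is transversally Hamiltonian, i.e. g₀ = 0 and ∂g₁/∂y₁ + ∂g₂/∂y₂ = 0. -/

import Mathlib

open MvPowerSeries

noncomputable section

/-- `R3` is the ring `ℂ[[x, y₁, y₂]]` of formal power series in three variables, where
variable `0` plays the role of `x`, variable `1` of `y₁` and variable `2` of `y₂`. -/
abbrev R3 : Type := MvPowerSeries (Fin 3) ℂ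

/-- Build a formal power series from its coefficient function. -/
def mk3 (g : (Fin 3 →₀ ℕ) → ℂ) : R3 := g

/-- Coefficient of the monomial with exponents `m` in `f`. -/
def cf (m : Fin 3 →₀ ℕ) (f : R3) : ℂ := MvPowerSeries.coeff (R := ℂ) m f

/-- The exponent vector of the monomial `x^{k₀} y₁^{k₁} y₂^{k₂}`. -/
def e (k₀ k₁ k₂ : ℕ) : Fin 3 →₀ ℕ :=
  Finsupp.single 0 k₀ + Finsupp.single 1 k₁ + Finsupp.single 2 k₂

/-- Formal partial derivative with respect to the `i`-th variable. -/
def pd (i : Fin 3) (f : R3) : R3 :=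
  mk3 fun m => ((m i : ℂ) + 1) * cf (m + Finsupp.single i 1) f

/-- The formal vector field (derivation) `b 0 · ∂/∂x + b 1 · ∂/∂y₁ + b 2 · ∂/∂y₂`. -/
def VF (b : Fin 3 → R3) (f : R3) : R3 := ∑ i : Fin 3, b i * pd i f

/-- The maximal ideal `𝔪` of `ℂ[[x,y₁,y₂]]` (series with zero constant term). -/
def mI : Ideal R3 := RingHom.ker (MvPowerSeries.constantCoeff (σ := Fin 3) (R := ℂ))

/-- The variables, as power series. -/
def Xv (i : Fin 3) : R3 := MvPowerSeries.X i

/-- Constant power series. -/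
def Cc (a : ℂ) : R3 := MvPowerSeries.C (σ := Fin 3) (R := ℂ) a

/-- The matrix of linear coefficients of a triple of power series. -/
def linM (φ : Fin 3 → R3) : Matrix (Fin 3) (Fin 3) ℂ :=
  Matrix.of fun i j => cf (Finsupp.single j 1) (φ i)

/-- `φ` is a formal diffeomorphism: a triple in `𝔪³` with invertible linear part. -/
def IsDiffeo (φ : Fin 3 → R3) : Prop :=
  (∀ i, MvPowerSeries.constantCoeff (σ := Fin 3) (R := ℂ) (φ i) = 0) ∧ IsUnit (linM φ).det

/-- `φ` is fibered: its first component is the variable `x`. -/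
def IsFibered (φ : Fin 3 → R3) : Prop := φ 0 = Xv 0

/-- Pullback (substitution) action: `pb φ f = f(φ 0, φ 1, φ 2)`, written coefficientwise
(the sum below has only finitely many nonzero terms when each `φ i` has zero constant
term, which is the case for formal diffeomorphisms). -/
def pb (φ : Fin 3 → R3) (f : R3) : R3 :=
  mk3 fun k => ∑' m : Fin 3 →₀ ℕ, cf m f * cf k (∏ i : Fin 3, φ i ^ (m i))

/-- `Φ` conjugates `Y` to `Z` (that is, `Z = Φ_*(Y)`): `Φ*(Z(f)) = Y(Φ*(f))` for all `f`. -/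
def Conj (φ Y Z : Fin 3 → R3) : Prop :=
  ∀ f : R3, pb φ (VF Z f) = VF Y (pb φ f)

/-- The power series `c(y₁ y₂)` obtained from a one-variable series `c` by substituting
`v = y₁ y₂`. -/
def csub (c : PowerSeries ℂ) : R3 :=
  mk3 fun m => if m 0 = 0 ∧ m 1 = m 2 then PowerSeries.coeff (R := ℂ) (m 1) c else 0

/-- Components of the normal form
`x²∂/∂x + (−λ + a₁x + c₁(y₁y₂))y₁∂/∂y₁ + (λ + a₂x + c₂(y₁y₂))y₂∂/∂y₂`. -/
def NF (l a₁ a₂ : ℂ) (c₁ c₂ : PowerSeries ℂ) : Fin 3 → R3 :=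
  ![Xv 0 ^ 2,
    (Cc (-l) + Cc a₁ * Xv 0 + csub c₁) * Xv 1,
    (Cc l + Cc a₂ * Xv 0 + csub c₂) * Xv 2]

/-- Components of a doubly-resonant saddle-node in prepared form
`x²∂/∂x + (−λy₁ + F₁)∂/∂y₁ + (λy₂ + F₂)∂/∂y₂`. -/
def SN (l : ℂ) (F₁ F₂ : R3) : Fin 3 → R3 :=
  ![Xv 0 ^ 2, Cc (-l) * Xv 1 + F₁, Cc l * Xv 2 + F₂]

/-- The residue of the prepared saddle-node with nonlinear parts `F₁, F₂`: the coefficient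
of `x y₁` in `F₁` plus the coefficient of `x y₂` in `F₂`. -/
def resid (F₁ F₂ : R3) : ℂ := cf (e 1 1 0) F₁ + cf (e 1 0 1) F₂

/-- `z` is not a nonpositive rational number. -/
def NotQle0 (z : ℂ) : Prop := ∀ q : ℚ, q ≤ 0 → z ≠ (q : ℂ)

/-- `φ` is transversally symplectic (with respect to `ω = dy₁∧dy₂/x` and `dx`):
it is fibered and `(∂φ₁/∂y₁)(∂φ₂/∂y₂) − (∂φ₁/∂y₂)(∂φ₂/∂y₁) = 1`. -/
def TransSymp (φ : Fin 3 → R3) : Prop :=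
  φ 0 = Xv 0 ∧ pd 1 (φ 1) * pd 2 (φ 2) - pd 2 (φ 1) * pd 1 (φ 2) = 1

/-- `b` depends only on the variable `x`. -/
def OnlyX (b : R3) : Prop := ∀ m : Fin 3 →₀ ℕ, (m 1 ≠ 0 ∨ m 2 ≠ 0) → cf m b = 0

/-- The vector field with components `b` is transversally Hamiltonian (w.r.t.
`ω = dy₁∧dy₂/x` and `dx`): `b 0 ∈ x·ℂ[[x]]` and `x·(∂b₁/∂y₁ + ∂b₂/∂y₂) = b 0`. -/
def TransHam (b : Fin 3 → R3) : Prop :=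
  OnlyX (b 0) ∧ MvPowerSeries.constantCoeff (σ := Fin 3) (R := ℂ) (b 0) = 0 ∧
    Xv 0 * (pd 1 (b 1) + pd 2 (b 2)) = b 0


/-- The exponential of a vector field (with components `g`, `g i ∈ 𝔪²`), as the formal
diffeomorphism `f ↦ ∑ₖ D^{∘k}(f)/k!`, defined coefficientwise. -/
def expD3 (D : R3 → R3) (f : R3) : R3 :=
  mk3 fun m => ∑' k : ℕ, ((k.factorial : ℂ))⁻¹ * cf m (D^[k] f)

lemma cf_pd (i : Fin 3) (f : R3) (m : Fin 3 →₀ ℕ) :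
    cf m (pd i f) = ((m i : ℂ) + 1) * cf (m + Finsupp.single i 1) f := rfl

lemma cf_mul (f h : R3) (m : Fin 3 →₀ ℕ) :
    cf m (f*h) = ∑ p ∈ Finset.HasAntidiagonal.antidiagonal m, cf p.1 f * cf p.2 h :=
  MvPowerSeries.coeff_mul m f h

lemma sub_add_single {p : Fin 3 →₀ ℕ} {i : Fin 3} (h : p i ≠ 0) :
    (p - Finsupp.single i 1) + Finsupp.single i 1 = p := by
  ext a
  rcases eq_or_ne a i with rfl | hne
  · simp only [Finsupp.add_apply, Finsupp.tsub_apply, Finsupp.single_eq_same]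
    omega
  · simp [Finsupp.single_apply, (Ne.symm hne)]

lemma pd_mul (i : Fin 3) (f h : R3) :
    pd i (f * h) = pd i f * h + f * pd i h := by
  apply MvPowerSeries.ext; intro m
  set s := Finsupp.single i 1 with hs
  show cf m _ = cf m (_ + _)
  rw [show (cf m (pd i f * h + f * pd i h)) = cf m (pd i f * h) + cf m (f * pd i h) from map_add _ _ _]
  rw [cf_pd, cf_mul, cf_mul, cf_mul, Finset.mul_sum]
  have key : ∀ p ∈ Finset.HasAntidiagonal.antidiagonal (m + s),
      ((m i : ℂ) + 1) * (cf p.1 f * cf p.2 h)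
      = (p.1 i : ℂ) * (cf p.1 f * cf p.2 h) + (p.2 i : ℂ) * (cf p.1 f * cf p.2 h) := by
    intro p hp
    rw [Finset.HasAntidiagonal.mem_antidiagonal] at hp
    have : p.1 i + p.2 i = m i + 1 := by
      rw [← Finsupp.add_apply, hp]; simp [hs, Finsupp.single_apply]
    rw [← add_mul]
    congr 1
    rw [show ((m i : ℂ) + 1) = ((m i + 1 : ℕ) : ℂ) by push_cast; ring, ← this]
    push_cast; ring
  rw [Finset.sum_congr rfl key, Finset.sum_add_distrib]
  congr 1
  · -- first sum
    rw [← Finset.sum_filter_of_ne (p := fun p => p.1 i ≠ 0)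
        (by intro p _ hne; intro h0; apply hne; rw [h0]; simp)]
    apply Finset.sum_nbij' (fun p => (p.1 - s, p.2)) (fun q => (q.1 + s, q.2))
    · intro p hp
      simp only [Finset.mem_filter, Finset.HasAntidiagonal.mem_antidiagonal] at hp ⊢
      obtain ⟨hp1, hp2⟩ := hp
      have hre : (p.1 - s) + s = p.1 := by rw [hs]; exact sub_add_single hp2
      have h2 : (p.1 - s) + p.2 + s = m + s := by
        rw [add_right_comm, hre, hp1]
      exact add_right_cancel h2
    · intro q hq
      simp only [Finset.mem_filter, Finset.HasAntidiagonal.mem_antidiagonal] at hq ⊢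
      constructor
      · rw [← hq]; ext a; simp [Finsupp.add_apply]; ring
      · simp [hs, Finsupp.add_apply, Finsupp.single_apply]
    · intro p hp
      simp only [Finset.mem_filter] at hp
      refine Prod.ext ?_ ?_ <;> simp [hs, sub_add_single hp.2]
    · intro q hq; ext <;> simp [hs]
    · intro p hp
      simp only [Finset.mem_filter] at hp
      rw [cf_pd]
      have hre : (p.1 - s) + s = p.1 := sub_add_single hp.2
      rw [hre]
      have : ((p.1 - s) i : ℂ) + 1 = (p.1 i : ℂ) := by
        have : (p.1 - s) i + 1 = p.1 i := by
          have := hp.2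
          simp [hs, Finsupp.tsub_apply, Finsupp.single_apply]
          omega
        exact_mod_cast congrArg (Nat.cast : ℕ → ℂ) this
      rw [← this]; ring
  · -- second sum
    rw [← Finset.sum_filter_of_ne (p := fun p => p.2 i ≠ 0)
        (by intro p _ hne; intro h0; apply hne; rw [h0]; simp)]
    apply Finset.sum_nbij' (fun p => (p.1, p.2 - s)) (fun q => (q.1, q.2 + s))
    · intro p hp
      simp only [Finset.mem_filter, Finset.HasAntidiagonal.mem_antidiagonal] at hp ⊢
      obtain ⟨hp1, hp2⟩ := hp
      have hre := sub_add_single (p := p.2) (i := i) hp2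
      have : p.1 + (p.2 - s) + s = m + s := by
        rw [add_assoc, hre, hp1]
      exact add_right_cancel this
    · intro q hq
      simp only [Finset.mem_filter, Finset.HasAntidiagonal.mem_antidiagonal] at hq ⊢
      constructor
      · rw [← hq]; ext a; simp [Finsupp.add_apply]; ring
      · simp [hs, Finsupp.add_apply, Finsupp.single_apply]
    · intro p hp
      simp only [Finset.mem_filter] at hp
      refine Prod.ext ?_ ?_ <;> simp [hs, sub_add_single hp.2]
    · intro q hq; ext <;> simp [hs]
    · intro p hp
      simp only [Finset.mem_filter] at hp
      rw [cf_pd]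
      have hre : (p.2 - s) + s = p.2 := sub_add_single hp.2
      rw [hre]
      have : ((p.2 - s) i : ℂ) + 1 = (p.2 i : ℂ) := by
        have : (p.2 - s) i + 1 = p.2 i := by
          have := hp.2
          simp [hs, Finsupp.tsub_apply, Finsupp.single_apply]
          omega
        exact_mod_cast congrArg (Nat.cast : ℕ → ℂ) this
      rw [← this]; ring

lemma cf_add (f h : R3) (m : Fin 3 →₀ ℕ) : cf m (f + h) = cf m f + cf m h := map_add _ _ _
lemma cf_smul (c : ℂ) (f : R3) (m : Fin 3 →₀ ℕ) : cf m (c • f) = c * cf m f := by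
  simp [cf]
lemma cf_one (m : Fin 3 →₀ ℕ) : cf m 1 = if m = 0 then 1 else 0 := by
  simp [cf, MvPowerSeries.coeff_one]
lemma cf_X (j : Fin 3) (m : Fin 3 →₀ ℕ) :
    cf m (MvPowerSeries.X j) = if m = Finsupp.single j 1 then 1 else 0 := by
  simp [cf, MvPowerSeries.coeff_X]
lemma cf_zero (m : Fin 3 →₀ ℕ) : cf m (0 : R3) = 0 := map_zero _

lemma pd_add (i : Fin 3) (f h : R3) : pd i (f + h) = pd i f + pd i h := by
  apply MvPowerSeries.ext; intro m
  show cf m _ = cf m (_ + _)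
  rw [cf_add, cf_pd, cf_pd, cf_pd, cf_add]; ring

lemma pd_smul (i : Fin 3) (c : ℂ) (f : R3) : pd i (c • f) = c • pd i f := by
  apply MvPowerSeries.ext; intro m
  show cf m _ = cf m (_ • _)
  rw [cf_smul, cf_pd, cf_pd, cf_smul]; ring

lemma pd_zero (i : Fin 3) : pd i (0 : R3) = 0 := by
  apply MvPowerSeries.ext; intro m
  show cf m _ = cf m 0
  rw [cf_zero, cf_pd, cf_zero]; ring

lemma pd_one (i : Fin 3) : pd i (1 : R3) = 0 := by
  apply MvPowerSeries.ext; intro m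
  show cf m _ = cf m 0
  rw [cf_zero, cf_pd, cf_one]
  have : m + Finsupp.single i 1 ≠ 0 := by
    intro h0
    have := congrArg (fun q : Fin 3 →₀ ℕ => q i) h0
    simp at this
  rw [if_neg this]; ring

lemma pd_X_self (i : Fin 3) : pd i (MvPowerSeries.X i : R3) = 1 := by
  apply MvPowerSeries.ext; intro m
  show cf m _ = cf m 1
  rw [cf_one, cf_pd, cf_X]
  rcases eq_or_ne m 0 with rfl | hm0
  · rw [if_pos rfl, if_pos (zero_add _)]; simp
  · rw [if_neg hm0]
    have : m + Finsupp.single i 1 ≠ Finsupp.single i 1 := by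
      intro h0
      exact hm0 (by simpa using add_right_cancel (h0.trans (zero_add (Finsupp.single i 1)).symm))
    rw [if_neg this]; ring

lemma pd_X_ne (i j : Fin 3) (hij : i ≠ j) : pd i (MvPowerSeries.X j : R3) = 0 := by
  apply MvPowerSeries.ext; intro m
  show cf m _ = cf m 0
  rw [cf_zero, cf_pd, cf_X]
  have : m + Finsupp.single i 1 ≠ Finsupp.single j 1 := by
    intro h0
    have := congrArg (fun q : Fin 3 →₀ ℕ => q i) h0
    simp [Finsupp.single_apply, hij, (Ne.symm hij)] at this
  rw [if_neg this]; ring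

lemma pd_comm (i j : Fin 3) (f : R3) : pd i (pd j f) = pd j (pd i f) := by
  apply MvPowerSeries.ext; intro m
  show cf m _ = cf m _
  rw [cf_pd, cf_pd, cf_pd, cf_pd]
  rcases eq_or_ne i j with rfl | hij
  · ring
  · rw [add_right_comm]
    simp only [Finsupp.add_apply, Finsupp.single_apply, hij, Ne.symm hij, if_false]
    push_cast; ring

/-- total degree of an exponent vector -/
def deg (m : Fin 3 →₀ ℕ) : ℕ := m 0 + m 1 + m 2

/-- `Mo n f`: all coefficients of `f` of total degree `< n` vanish. -/
def Mo (n : ℕ) (f : R3) : Prop := ∀ m, deg m < n → cf m f = 0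

lemma mo_mono {n k : ℕ} {f : R3} (h : Mo n f) (hk : k ≤ n) : Mo k f :=
  fun m hm => h m (lt_of_lt_of_le hm hk)

lemma mo_zero (n : ℕ) : Mo n (0 : R3) := fun m _ => cf_zero m

lemma mo_add {n : ℕ} {f h : R3} (hf : Mo n f) (hh : Mo n h) : Mo n (f + h) := by
  intro m hm; rw [cf_add, hf m hm, hh m hm]; ring

lemma mo_smul {n : ℕ} (c : ℂ) {f : R3} (hf : Mo n f) : Mo n (c • f) := by
  intro m hm; rw [cf_smul, hf m hm]; ring

lemma deg_add (p q : Fin 3 →₀ ℕ) : deg (p + q) = deg p + deg q := by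
  simp [deg, Finsupp.add_apply]; ring

lemma mo_mul {a b : ℕ} {f h : R3} (hf : Mo a f) (hh : Mo b h) : Mo (a + b) (f * h) := by
  intro m hm
  rw [cf_mul]
  apply Finset.sum_eq_zero
  intro p hp
  rw [Finset.HasAntidiagonal.mem_antidiagonal] at hp
  have hdeg : deg p.1 + deg p.2 = deg m := by rw [← deg_add, hp]
  rcases lt_or_ge (deg p.1) a with h1 | h1
  · rw [hf p.1 h1]; ring
  · have : deg p.2 < b := by omega
    rw [hh p.2 this]; ring

lemma mo_pd {n : ℕ} {f : R3} (i : Fin 3) (hf : Mo (n+1) f) : Mo n (pd i f) := by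
  intro m hm
  rw [cf_pd]
  have : deg (m + Finsupp.single i 1) < n + 1 := by
    rw [deg_add]
    have : deg (Finsupp.single i 1) = 1 := by
      fin_cases i <;> simp [deg, Finsupp.single_apply]
    omega
  rw [hf _ this]; ring

lemma mo_top (f : R3) : Mo 0 f := fun m hm => absurd hm (Nat.not_lt_zero _)

lemma mo_X (j : Fin 3) : Mo 1 (MvPowerSeries.X j : R3) := by
  intro m hm
  rw [cf_X, if_neg]; intro h0
  rw [h0] at hm
  have : deg (Finsupp.single j 1) = 1 := by
    fin_cases j <;> simp [deg, Finsupp.single_apply]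
  omega


lemma VF_eq (g : Fin 3 → R3) (h0 : g 0 = 0) (f : R3) :
    VF g f = g 1 * pd 1 f + g 2 * pd 2 f := by
  rw [VF, Fin.sum_univ_three, h0, zero_mul, zero_add]

lemma pd_sub (i : Fin 3) (f h : R3) : pd i (f - h) = pd i f - pd i h := by
  have := pd_add i h (f - h)
  rw [add_sub_cancel] at this
  rw [this]; ring

/-- Poisson-type bracket in the `y` variables. -/
def br (a b : R3) : R3 := pd 1 a * pd 2 b - pd 2 a * pd 1 b

lemma VF_add (g : Fin 3 → R3) (f h : R3) : VF g (f + h) = VF g f + VF g h := by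
  simp only [VF, pd_add, mul_add, ← Finset.sum_add_distrib]

lemma VF_smul (g : Fin 3 → R3) (c : ℂ) (f : R3) : VF g (c • f) = c • VF g f := by
  simp only [VF, pd_smul, Finset.smul_sum, mul_smul_comm]

lemma VF_zero (g : Fin 3 → R3) : VF g 0 = 0 := by
  simp only [VF, pd_zero, mul_zero, Finset.sum_const_zero]

lemma VF_one (g : Fin 3 → R3) : VF g 1 = 0 := by
  simp only [VF, pd_one, mul_zero, Finset.sum_const_zero]

/-- Key identity: transport of the bracket by the derivation `D = VF g` with `g 0 = 0`. -/
lemma br_VF (g : Fin 3 → R3) (h0 : g 0 = 0) (f h : R3) :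
    br (VF g f) h + br f (VF g h)
      = VF g (br f h) + (pd 1 (g 1) + pd 2 (g 2)) * br f h := by
  simp only [br, VF_eq g h0, pd_add, pd_sub, pd_mul]
  simp only [show ∀ z : R3, pd 2 (pd 1 z) = pd 1 (pd 2 z) from fun z => pd_comm 2 1 z]
  ring


lemma deg_eq_zero {m : Fin 3 →₀ ℕ} (h : deg m = 0) : m = 0 := by
  ext a
  have h0 : m 0 = 0 ∧ m 1 = 0 ∧ m 2 = 0 := by unfold deg at h; omega
  fin_cases a <;> simp [h0.1, h0.2.1, h0.2.2]

lemma mo_of_mI {f : R3} (h : f ∈ mI) : Mo 1 f := by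
  intro m hm
  have : m = 0 := deg_eq_zero (by omega)
  subst this
  simpa [cf, mI, RingHom.mem_ker, MvPowerSeries.coeff_zero_eq_constantCoeff] using h

lemma mo_of_mI_sq {f : R3} (h : f ∈ mI ^ 2) : Mo 2 f := by
  rw [pow_two] at h
  refine Submodule.mul_induction_on h ?_ ?_
  · intro a ha b hb
    exact mo_mul (mo_of_mI ha) (mo_of_mI hb)
  · intro a b ha hb; exact mo_add ha hb

section Exp
variable (g : Fin 3 → R3)

lemma mo_VF (hg2 : ∀ i, Mo 2 (g i)) (f : R3) : Mo 2 (VF g f) := by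
  rw [VF, Fin.sum_univ_three]
  have h : ∀ i : Fin 3, Mo 2 (g i * pd i f) := fun i =>
    mo_mono (n := 2 + 0) (mo_mul (hg2 i) (mo_top _)) (le_refl 2)
  exact mo_add (mo_add (h 0) (h 1)) (h 2)

lemma mo_VF_of (hg2 : ∀ i, Mo 2 (g i)) {n : ℕ} {f : R3} (hf : Mo n f) : Mo (n + 1) (VF g f) := by
  cases n with
  | zero => exact mo_mono (mo_VF g hg2 f) (by omega)
  | succ n =>
      rw [VF, Fin.sum_univ_three]
      have h : ∀ i : Fin 3, Mo (n + 2) (g i * pd i f) := fun i =>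
        mo_mono (n := 2 + n) (mo_mul (hg2 i) (mo_pd i hf)) (le_of_eq (by omega))
      exact mo_add (mo_add (h 0) (h 1)) (h 2)

lemma mo_VF_iter (hg2 : ∀ i, Mo 2 (g i)) {n : ℕ} {f : R3} (hf : Mo n f) (k : ℕ) : Mo (n + k) ((VF g)^[k] f) := by
  induction k with
  | zero => simpa using hf
  | succ k ih =>
      rw [Function.iterate_succ_apply']
      exact mo_mono (mo_VF_of g hg2 ih) (le_of_eq (by omega))


lemma cf_expD3 (D : R3 → R3) (f : R3) (m : Fin 3 →₀ ℕ) (N : ℕ)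
    (h : ∀ k, N ≤ k → cf m (D^[k] f) = 0) :
    cf m (expD3 D f) = ∑ k ∈ Finset.range N, ((k.factorial : ℂ))⁻¹ * cf m (D^[k] f) := by
  show (∑' k : ℕ, ((k.factorial : ℂ))⁻¹ * cf m (D^[k] f)) = _
  apply tsum_eq_sum
  intro k hk
  rw [h k (by simpa using hk)]; ring

lemma VF_X0 : VF g (MvPowerSeries.X 0) = g 0 := by
  rw [VF, Fin.sum_univ_three, pd_X_self, pd_X_ne 1 0 (by decide), pd_X_ne 2 0 (by decide)]
  simp

lemma iter_X0 (k : ℕ) : (VF g)^[k + 1] (MvPowerSeries.X 0) = (VF g)^[k] (g 0) := by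
  rw [Function.iterate_succ_apply, VF_X0]

lemma VF_iter_zero (j : ℕ) : (VF g)^[j] (0 : R3) = 0 := by
  induction j with
  | zero => rfl
  | succ j ihj => rw [Function.iterate_succ_apply, VF_zero, ihj]

lemma comp0_iff (hg2 : ∀ i, Mo 2 (g i)) : expD3 (VF g) (MvPowerSeries.X 0) = MvPowerSeries.X 0 ↔ g 0 = 0 := by
  constructor
  · intro hφ
    apply MvPowerSeries.ext
    intro m
    show cf m (g 0) = cf m 0
    rw [cf_zero]
    have step : ∀ m : Fin 3 →₀ ℕ, Mo (deg m) (g 0) → cf m (g 0) = 0 := by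
      intro m hMo
      have hvan : ∀ k, 2 ≤ k → cf m ((VF g)^[k] (MvPowerSeries.X 0)) = 0 := by
        intro k hk
        obtain ⟨j, rfl⟩ : ∃ j, k = j + 1 := ⟨k - 1, by omega⟩
        rw [iter_X0]
        exact mo_VF_iter g hg2 hMo j m (by omega)
      have hco := congrArg (cf m) hφ
      rw [cf_expD3 (VF g) _ m 2 hvan, Finset.sum_range_succ, Finset.sum_range_one,
        Function.iterate_one, VF_X0, Function.iterate_zero] at hco
      simp only [id_eq, Nat.factorial_one, Nat.factorial_zero, Nat.cast_one, inv_one,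
        one_mul] at hco
      linear_combination hco
    suffices H : ∀ n (m : Fin 3 →₀ ℕ), deg m ≤ n → cf m (g 0) = 0 from H (deg m) m le_rfl
    intro n
    induction n with
    | zero =>
        intro m hm
        exact step m (mo_mono (mo_top (g 0)) (by omega))
    | succ n ih =>
        intro m hm
        refine step m ?_
        intro m' hm'
        exact ih m' (by omega)
  · intro h0
    apply MvPowerSeries.ext
    intro m
    show cf m _ = cf m _
    have hD0 : VF g (MvPowerSeries.X 0) = 0 := by rw [VF_X0, h0]
    have hvan : ∀ k, 1 ≤ k → cf m ((VF g)^[k] (MvPowerSeries.X 0)) = 0 := by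
      intro k hk
      obtain ⟨j, rfl⟩ : ∃ j, k = j + 1 := ⟨k - 1, by omega⟩
      rw [Function.iterate_succ_apply, hD0, VF_iter_zero, cf_zero]
    rw [cf_expD3 (VF g) _ m 1 hvan, Finset.sum_range_one]
    simp [cf]

/-- divergence -/
def dvg (g : Fin 3 → R3) : R3 := pd 1 (g 1) + pd 2 (g 2)

/-- The operator `L = D + dv·` -/
def Lg (g : Fin 3 → R3) (f : R3) : R3 := VF g f + dvg g * f

def wjk (g : Fin 3 → R3) (j k : ℕ) : R3 :=
  br ((VF g)^[j] (MvPowerSeries.X 1)) ((VF g)^[k] (MvPowerSeries.X 2))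

lemma br_X12 : br (MvPowerSeries.X 1 : R3) (MvPowerSeries.X 2) = 1 := by
  rw [br, pd_X_self, pd_X_self, pd_X_ne 2 1 (by decide), pd_X_ne 1 2 (by decide)]
  ring

lemma Lg_add (f h : R3) : Lg g (f + h) = Lg g f + Lg g h := by
  rw [Lg, Lg, Lg, VF_add]; ring

lemma Lg_smul (c : ℂ) (f : R3) : Lg g (c • f) = c • Lg g f := by
  rw [Lg, Lg, VF_smul, smul_add, mul_smul_comm]

lemma Lg_w (h0 : g 0 = 0) (j k : ℕ) :
    Lg g (wjk g j k) = wjk g (j + 1) k + wjk g j (k + 1) := by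
  have key := br_VF g h0 ((VF g)^[j] (MvPowerSeries.X 1)) ((VF g)^[k] (MvPowerSeries.X 2))
  rw [Lg, wjk, wjk, wjk, Function.iterate_succ_apply', Function.iterate_succ_apply']
  rw [show dvg g = pd 1 (g 1) + pd 2 (g 2) from rfl]
  linear_combination -key

lemma u_eq (h0 : g 0 = 0) (n : ℕ) :
    (Lg g)^[n] 1 = ∑ j ∈ Finset.range (n + 1), ((n.choose j : ℂ)) • wjk g j (n - j) := by
  induction n with
  | zero =>
      rw [Finset.sum_range_one]
      simp only [Nat.sub_self, Nat.choose_self, Nat.cast_one, one_smul, wjk,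
        Function.iterate_zero, id_eq, br_X12]
  | succ n ih =>
      rw [Function.iterate_succ_apply', ih]
      have expand : Lg g (∑ j ∈ Finset.range (n + 1), ((n.choose j : ℂ)) • wjk g j (n - j))
          = ∑ j ∈ Finset.range (n + 1),
              ((n.choose j : ℂ)) • (wjk g (j + 1) (n - j) + wjk g j (n - j + 1)) := by
        have hs := map_sum (AddMonoidHom.mk' (Lg g) (Lg_add g))
          (fun j => ((n.choose j : ℂ)) • wjk g j (n - j)) (Finset.range (n+1))
        rw [show ((AddMonoidHom.mk' (Lg g) (Lg_add g)) : R3 → R3) = Lg g from rfl] at hs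
        rw [hs]
        apply Finset.sum_congr rfl
        intro j _
        rw [Lg_smul, Lg_w g h0]
      rw [expand]
      simp only [smul_add, Finset.sum_add_distrib]
      have hsplit : ∀ j : ℕ, (((n+1).choose (j+1) : ℂ)) • wjk g (j+1) (n + 1 - (j+1))
          = ((n.choose j : ℂ)) • wjk g (j+1) (n - j)
            + ((n.choose (j+1) : ℂ)) • wjk g (j+1) (n - j) := by
        intro j
        rw [Nat.choose_succ_succ, Nat.cast_add, add_smul,
          show n + 1 - (j+1) = n - j from by omega]
      have hS2 : (∑ j ∈ Finset.range (n+1), ((n.choose j : ℂ)) • wjk g j (n - j + 1))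
          = (∑ j ∈ Finset.range (n+1), ((n.choose (j+1) : ℂ)) • wjk g (j+1) (n - j))
            + wjk g 0 (n + 1) := by
        rw [Finset.sum_range_succ' (fun j => ((n.choose j : ℂ)) • wjk g j (n - j + 1)) n]
        rw [Finset.sum_range_succ (fun j => ((n.choose (j+1) : ℂ)) • wjk g (j+1) (n - j)) n]
        rw [Nat.choose_succ_self, Nat.cast_zero, zero_smul, add_zero]
        congr 1
        · apply Finset.sum_congr rfl
          intro j hj
          rw [Finset.mem_range] at hj
          rw [show n - (j+1) + 1 = n - j from by omega]
        · rw [show n - 0 + 1 = n + 1 from by omega]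
          simp
      rw [Finset.sum_range_succ' (fun j => (((n+1).choose j : ℂ)) • wjk g j (n + 1 - j)) (n+1)]
      rw [Finset.sum_congr rfl (fun j _ => hsplit j), Finset.sum_add_distrib]
      rw [hS2]
      rw [show (((n+1).choose 0 : ℂ)) • wjk g 0 (n + 1 - 0) = wjk g 0 (n+1) from by simp]
      abel

lemma cf_sub (f h : R3) (m : Fin 3 →₀ ℕ) : cf m (f - h) = cf m f - cf m h := map_sub _ _ _

lemma cf_sum {α : Type*} (s : Finset α) (F : α → R3) (m : Fin 3 →₀ ℕ) :
    cf m (∑ x ∈ s, F x) = ∑ x ∈ s, cf m (F x) := map_sum _ _ _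

lemma mo_sub {n : ℕ} {f h : R3} (hf : Mo n f) (hh : Mo n h) : Mo n (f - h) := by
  intro m hm; rw [cf_sub, hf m hm, hh m hm]; ring

lemma deg_single (i : Fin 3) : deg (Finsupp.single i 1) = 1 := by
  fin_cases i <;> simp [deg, Finsupp.single_apply]

lemma mo_dv (hg2 : ∀ i, Mo 2 (g i)) : Mo 1 (dvg g) :=
  mo_add (mo_pd 1 (hg2 1)) (mo_pd 2 (hg2 2))

lemma mo_w (hg2 : ∀ i, Mo 2 (g i)) (j k : ℕ) : Mo (j + k) (wjk g j k) := by
  have ha : Mo (j + 1) ((VF g)^[j] (MvPowerSeries.X 1)) := by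
    have := mo_VF_iter g hg2 (mo_X 1) j
    rwa [Nat.add_comm] at this
  have hb : Mo (k + 1) ((VF g)^[k] (MvPowerSeries.X 2)) := by
    have := mo_VF_iter g hg2 (mo_X 2) k
    rwa [Nat.add_comm] at this
  exact mo_sub (mo_mul (mo_pd 1 ha) (mo_pd 2 hb)) (mo_mul (mo_pd 2 ha) (mo_pd 1 hb))

lemma mo_u (hg2 : ∀ i, Mo 2 (g i)) (n : ℕ) : Mo n ((Lg g)^[n] 1) := by
  induction n with
  | zero => exact mo_top _
  | succ n ih =>
      rw [Function.iterate_succ_apply', Lg]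
      exact mo_add (mo_VF_of g hg2 ih)
        (mo_mono (n := 1 + n) (mo_mul (mo_dv g hg2) ih) (le_of_eq (by omega)))

lemma hPD (hg2 : ∀ i, Mo 2 (g i)) (f : R3) (hf : Mo 1 f) {N : ℕ} {m p : Fin 3 →₀ ℕ}
    (hp : deg p ≤ deg m) (hN : deg m + 1 ≤ N) (i : Fin 3) :
    cf p (pd i (expD3 (VF g) f))
      = ∑ k ∈ Finset.range N, ((k.factorial : ℂ))⁻¹ * cf p (pd i ((VF g)^[k] f)) := by
  have hvan : ∀ k, N ≤ k → cf (p + Finsupp.single i 1) ((VF g)^[k] f) = 0 := by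
    intro k hk
    apply mo_VF_iter g hg2 hf k
    rw [deg_add, deg_single]
    omega
  rw [cf_pd, cf_expD3 (VF g) f (p + Finsupp.single i 1) N hvan, Finset.mul_sum]
  apply Finset.sum_congr rfl
  intro k _
  rw [cf_pd]
  ring

lemma prod_term (hg2 : ∀ i, Mo 2 (g i)) (f h : R3) (hf : Mo 1 f) (hh : Mo 1 h)
    (i i' : Fin 3) {m : Fin 3 →₀ ℕ} {N : ℕ} (hN : deg m + 1 ≤ N) :
    cf m (pd i (expD3 (VF g) f) * pd i' (expD3 (VF g) h))
      = ∑ j ∈ Finset.range N, ∑ k ∈ Finset.range N,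
          ((j.factorial : ℂ))⁻¹ * ((k.factorial : ℂ))⁻¹
            * cf m (pd i ((VF g)^[j] f) * pd i' ((VF g)^[k] h)) := by
  rw [cf_mul]
  have step : ∀ p ∈ Finset.HasAntidiagonal.antidiagonal m,
      cf p.1 (pd i (expD3 (VF g) f)) * cf p.2 (pd i' (expD3 (VF g) h))
        = ∑ j ∈ Finset.range N, ∑ k ∈ Finset.range N,
            (((j.factorial : ℂ))⁻¹ * cf p.1 (pd i ((VF g)^[j] f)))
              * (((k.factorial : ℂ))⁻¹ * cf p.2 (pd i' ((VF g)^[k] h))) := by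
    intro p hp
    rw [Finset.HasAntidiagonal.mem_antidiagonal] at hp
    have hd : deg p.1 + deg p.2 = deg m := by rw [← deg_add, hp]
    rw [hPD g hg2 f hf (by omega) hN i, hPD g hg2 h hh (by omega) hN i',
      Finset.sum_mul_sum]
  rw [Finset.sum_congr rfl step, Finset.sum_comm]
  apply Finset.sum_congr rfl
  intro j _
  rw [Finset.sum_comm]
  apply Finset.sum_congr rfl
  intro k _
  rw [cf_mul, Finset.mul_sum]
  apply Finset.sum_congr rfl
  intro p _
  ring

lemma star (hg2 : ∀ i, Mo 2 (g i)) {m : Fin 3 →₀ ℕ} {N : ℕ} (hN : deg m + 1 ≤ N) :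
    cf m (br (expD3 (VF g) (MvPowerSeries.X 1)) (expD3 (VF g) (MvPowerSeries.X 2)))
      = ∑ j ∈ Finset.range N, ∑ k ∈ Finset.range N,
          ((j.factorial : ℂ))⁻¹ * ((k.factorial : ℂ))⁻¹ * cf m (wjk g j k) := by
  rw [br, cf_sub, prod_term g hg2 _ _ (mo_X 1) (mo_X 2) 1 2 hN,
    prod_term g hg2 _ _ (mo_X 1) (mo_X 2) 2 1 hN, ← Finset.sum_sub_distrib]
  apply Finset.sum_congr rfl
  intro j _
  rw [← Finset.sum_sub_distrib]
  apply Finset.sum_congr rfl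
  intro k _
  rw [wjk, br, cf_sub]
  ring

lemma fact_id {n j : ℕ} (h : j ≤ n) :
    ((n.factorial : ℂ))⁻¹ * (n.choose j : ℂ)
      = ((j.factorial : ℂ))⁻¹ * (((n - j).factorial : ℂ))⁻¹ := by
  have key : (n.choose j) * j.factorial * (n - j).factorial = n.factorial :=
    Nat.choose_mul_factorial_mul_factorial h
  have keyC : ((n.choose j : ℂ)) * (j.factorial : ℂ) * ((n - j).factorial : ℂ)
      = (n.factorial : ℂ) := by exact_mod_cast congrArg (Nat.cast : ℕ → ℂ) key
  have h1 : (n.factorial : ℂ) ≠ 0 := Nat.cast_ne_zero.2 (Nat.factorial_ne_zero n)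
  have h2 : (j.factorial : ℂ) ≠ 0 := Nat.cast_ne_zero.2 (Nat.factorial_ne_zero j)
  have h3 : (((n - j).factorial : ℂ)) ≠ 0 := Nat.cast_ne_zero.2 (Nat.factorial_ne_zero _)
  field_simp
  linear_combination keyC

lemma square_to_u (hg2 : ∀ i, Mo 2 (g i)) (h0 : g 0 = 0) {m : Fin 3 →₀ ℕ} {N : ℕ}
    (hN : deg m + 1 ≤ N) :
    (∑ j ∈ Finset.range N, ∑ k ∈ Finset.range N,
        ((j.factorial : ℂ))⁻¹ * ((k.factorial : ℂ))⁻¹ * cf m (wjk g j k))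
      = ∑ n ∈ Finset.range N, ((n.factorial : ℂ))⁻¹ * cf m ((Lg g)^[n] 1) := by
  -- RHS as a triangle sum
  have hRHS : (∑ n ∈ Finset.range N, ((n.factorial : ℂ))⁻¹ * cf m ((Lg g)^[n] 1))
      = ∑ n ∈ Finset.range N, ∑ j ∈ Finset.range (n+1),
          ((j.factorial : ℂ))⁻¹ * (((n - j).factorial : ℂ))⁻¹ * cf m (wjk g j (n - j)) := by
    apply Finset.sum_congr rfl
    intro n _
    rw [u_eq g h0 n, cf_sum, Finset.mul_sum]
    apply Finset.sum_congr rfl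
    intro j hj
    rw [Finset.mem_range] at hj
    rw [cf_smul, ← mul_assoc, fact_id (by omega)]
  rw [hRHS]
  -- both sides as sums over explicit finsets
  rw [← Finset.sum_product']
  rw [Finset.sum_sigma']
  -- LHS over the square; restrict to the triangle
  have hsub : ((Finset.range N ×ˢ Finset.range N).filter (fun p => p.1 + p.2 < N))
      ⊆ Finset.range N ×ˢ Finset.range N := Finset.filter_subset _ _
  rw [← Finset.sum_subset hsub (by
    intro p hp hnp
    rw [Finset.mem_filter] at hnp
    have hp' := hp
    rw [Finset.mem_product, Finset.mem_range, Finset.mem_range] at hp'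
    have hge : N ≤ p.1 + p.2 := by
      by_contra hlt
      exact hnp ⟨hp, by omega⟩
    have : cf m (wjk g p.1 p.2) = 0 := mo_w g hg2 p.1 p.2 m (by omega)
    rw [this]; ring)]
  -- now a bijection triangle ↔ sigma
  apply Finset.sum_nbij' (fun p => (⟨p.1 + p.2, p.1⟩ : Σ _ : ℕ, ℕ))
    (fun q => (q.2, q.1 - q.2))
  · intro p hp
    rw [Finset.mem_filter, Finset.mem_product, Finset.mem_range, Finset.mem_range] at hp
    simp only [Finset.mem_sigma, Finset.mem_range]
    omega
  · intro q hq
    rw [Finset.mem_sigma, Finset.mem_range, Finset.mem_range] at hq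
    rw [Finset.mem_filter, Finset.mem_product, Finset.mem_range, Finset.mem_range]
    omega
  · intro p hp
    rw [Finset.mem_filter, Finset.mem_product] at hp
    simp
  · rintro ⟨a, b⟩ hq
    simp only [Finset.mem_sigma, Finset.mem_range] at hq
    have hab : b + (a - b) = a := by omega
    simp only
    rw [hab]
  · intro p hp
    simp only
    rw [show p.1 + p.2 - p.1 = p.2 from by omega]

lemma u_one : (Lg g)^[1] 1 = dvg g := by
  rw [Function.iterate_one, Lg, VF_one, mul_one, zero_add]

lemma J_iff (hg2 : ∀ i, Mo 2 (g i)) (h0 : g 0 = 0) :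
    br (expD3 (VF g) (MvPowerSeries.X 1)) (expD3 (VF g) (MvPowerSeries.X 2)) = 1
      ↔ dvg g = 0 := by
  constructor
  · intro hJ
    apply MvPowerSeries.ext
    intro m
    show cf m (dvg g) = cf m 0
    rw [cf_zero]
    have step : ∀ m : Fin 3 →₀ ℕ, Mo (deg m) (dvg g) → cf m (dvg g) = 0 := by
      intro m hMo
      have hun : ∀ n, Mo (deg m + n) ((Lg g)^[n + 1] 1) := by
        intro n
        induction n with
        | zero => rw [u_one]; simpa using hMo
        | succ n ih =>
            rw [Function.iterate_succ_apply', Lg]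
            exact mo_add (mo_VF_of g hg2 ih)
              (mo_mono (n := 1 + (deg m + n)) (mo_mul (mo_dv g hg2) ih)
                (le_of_eq (by omega)))
      have hco := congrArg (cf m) hJ
      rw [star g hg2 (show deg m + 1 ≤ deg m + 2 by omega),
        square_to_u g hg2 h0 (show deg m + 1 ≤ deg m + 2 by omega)] at hco
      have hred : (∑ n ∈ Finset.range (deg m + 2), ((n.factorial : ℂ))⁻¹ * cf m ((Lg g)^[n] 1))
          = ∑ n ∈ Finset.range 2, ((n.factorial : ℂ))⁻¹ * cf m ((Lg g)^[n] 1) := by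
        symm
        apply Finset.sum_subset (by intro x hx; rw [Finset.mem_range] at hx ⊢; omega)
        intro n _ hn
        rw [Finset.mem_range] at hn
        obtain ⟨j, rfl⟩ : ∃ j, n = j + 1 + 1 := ⟨n - 2, by omega⟩
        rw [show j + 1 + 1 = (j + 1) + 1 from rfl]
        rw [hun (j + 1) m (by omega)]
        ring
      rw [hred, Finset.sum_range_succ, Finset.sum_range_one, u_one,
        Function.iterate_zero] at hco
      simp only [id_eq, Nat.factorial_one, Nat.factorial_zero, Nat.cast_one, inv_one,
        one_mul] at hco
      linear_combination hco
    suffices H : ∀ n (m : Fin 3 →₀ ℕ), deg m ≤ n → cf m (dvg g) = 0 from H (deg m) m le_rfl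
    intro n
    induction n with
    | zero => intro m hm; exact step m (mo_mono (mo_top _) (by omega))
    | succ n ih =>
        intro m hm
        exact step m (fun m' hm' => ih m' (by omega))
  · intro hdv
    have hLu : ∀ n, 1 ≤ n → (Lg g)^[n] 1 = 0 := by
      intro n hn
      obtain ⟨j, rfl⟩ : ∃ j, n = j + 1 := ⟨n - 1, by omega⟩
      induction j with
      | zero => rw [u_one, hdv]
      | succ j ihj =>
          rw [show j + 1 + 1 = (j + 1) + 1 from rfl, Function.iterate_succ_apply',
            ihj (by omega), Lg, VF_zero, mul_zero, add_zero]
    apply MvPowerSeries.ext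
    intro m
    show cf m _ = cf m 1
    rw [star g hg2 (le_refl (deg m + 1)), square_to_u g hg2 h0 (le_refl (deg m + 1))]
    have hred : (∑ n ∈ Finset.range (deg m + 1), ((n.factorial : ℂ))⁻¹ * cf m ((Lg g)^[n] 1))
        = ∑ n ∈ Finset.range 1, ((n.factorial : ℂ))⁻¹ * cf m ((Lg g)^[n] 1) := by
      symm
      apply Finset.sum_subset (by intro x hx; rw [Finset.mem_range] at hx ⊢; omega)
      intro n _ hn
      rw [Finset.mem_range] at hn
      rw [hLu n (by omega), cf_zero]
      ring
    rw [hred, Finset.sum_range_one, Function.iterate_zero]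
    simp

lemma main_iff (hg : ∀ i, g i ∈ mI ^ 2) :
    (expD3 (VF g) (MvPowerSeries.X 0) = MvPowerSeries.X 0
      ∧ br (expD3 (VF g) (MvPowerSeries.X 1)) (expD3 (VF g) (MvPowerSeries.X 2)) = 1)
    ↔ (g 0 = 0 ∧ pd 1 (g 1) + pd 2 (g 2) = 0) := by
  have hg2 : ∀ i, Mo 2 (g i) := fun i => mo_of_mI_sq (hg i)
  constructor
  · rintro ⟨h1, h2⟩
    have h0 : g 0 = 0 := (comp0_iff g hg2).1 h1
    exact ⟨h0, (J_iff g hg2 h0).1 h2⟩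
  · rintro ⟨h0, hdv⟩
    exact ⟨(comp0_iff g hg2).2 h0, (J_iff g hg2 h0).2 hdv⟩


end Exp

/-- **`exp(F)` is transversally symplectic iff `F` is transversally Hamiltonian with zero
`x`-component**, i.e. `g₀ = 0` and `∂g₁/∂y₁ + ∂g₂/∂y₂ = 0`. -/
theorem exp_transversally_symplectic_iff
    (g : Fin 3 → R3) (hg : ∀ i, g i ∈ mI ^ 2) :
    TransSymp (fun i => expD3 (VF g) (Xv i)) ↔
      (g 0 = 0 ∧ pd 1 (g 1) + pd 2 (g 2) = 0) := by
  constructor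
  · rintro ⟨h1, h2⟩
    exact (main_iff g hg).1 ⟨h1, h2⟩
  · intro h
    exact ⟨((main_iff g hg).2 h).1, ((main_iff g hg).2 h).2⟩

end
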